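/- For every k ∈ ℕ, the set I_k = {i ∈ ℤ : −F_{2k} ≤ i < F_{2k+1}} coincides with the set of integers whose canonical Fibonacci representation has length at most 2k+1. Moreover the minimal value −F_{2k} is attained by the word 1(00)^k and the maximal value F_{2k+1} − 1 is attained by the word 0(10)^k. -/

import Mathlib

/-- Fibonacci sequence with `F 0 = 1`, `F 1 = 1`, `F 2 = 2`. -/
def F : ℕ → ℤ
  | 0 => 1
  | 1 => 1
  | (n+2) => F (n+1) + F n

/-- Numerical value of a binary digit. -/
def bv (x : Bool) : ℤ := if x then 1 else 0

/-- Value of an odd-length binary word `w = w_{2k+1} ⋯ w_1` (most significant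
digit first): `val_F(w) = Σ_{i=1}^{2k} w_i F_i − w_{2k+1} F_{2k}`. -/
def valF (w : List Bool) : ℤ :=
  (∑ i ∈ Finset.range (w.length - 1), bv (w.reverse.getD i false) * F (i+1))
    - bv (w.reverse.getD (w.length - 1) false) * F (w.length - 1)

/-- The word has no factor `11`. -/
def no11 (w : List Bool) : Prop :=
  List.Chain' (fun x y => ¬(x = true ∧ y = true)) w

/-- Words of the canonical representation language: odd length, no factor 11,
not beginning with 000 nor with 101. -/
def IsRep (w : List Bool) : Prop :=
  Odd w.length ∧ no11 w ∧
    ¬ ([false, false, false] <+: w) ∧ ¬ ([true, false, true] <+: w)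

/-- `Ik k = {i ∈ ℤ : −F_{2k} ≤ i < F_{2k+1}}`. -/
def Ik (k : ℕ) : Set ℤ := {i : ℤ | -F (2*k) ≤ i ∧ i < F (2*k+1)}

/-- Shifted version of `Ik` incorporating `I_{−1} = ∅`. -/
def Iext : ℕ → Set ℤ
  | 0 => ∅
  | (k+1) => Ik k

/-- The morphism `h : 0 ↦ 00, 1 ↦ 01, 2 ↦ 10` on single letters. -/
def h3 : Fin 3 → List Bool
  | 0 => [false, false]
  | 1 => [false, true]
  | 2 => [true, false]

def sval : List Bool → ℤ
  | [] => 0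
  | a :: u => bv a * F (u.length + 1) + sval u

lemma F_pos : ∀ n, 0 < F n
  | 0 => by norm_num [F]
  | 1 => by norm_num [F]
  | (n+2) => by rw [F]; have := F_pos n; have := F_pos (n+1); omega

lemma F_le_succ (n : ℕ) : F n ≤ F (n+1) := by
  cases n with
  | zero => norm_num [F]
  | succ m => rw [show m+1+1 = m+2 from rfl, F]; have := F_pos m; omega

lemma F_mono : Monotone F := monotone_nat_of_le_succ F_le_succ

lemma bv_true : bv true = 1 := rfl
lemma bv_false : bv false = 0 := rfl

lemma bv_nonneg (x : Bool) : 0 ≤ bv x := by cases x <;> simp [bv]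

lemma sval_eq_sum (u : List Bool) :
    sval u = ∑ i ∈ Finset.range u.length, bv (u.reverse.getD i false) * F (i+1) := by
  induction u with
  | nil => simp [sval]
  | cons a u ih =>
      rw [sval, ih]
      simp only [List.length_cons, List.reverse_cons]
      rw [Finset.sum_range_succ]
      have h1 : ∀ i ∈ Finset.range u.length,
          bv ((u.reverse ++ [a]).getD i false) * F (i+1)
            = bv (u.reverse.getD i false) * F (i+1) := by
        intro i hi
        simp only [Finset.mem_range] at hi
        rw [List.getD_append]
        · simpa using hi
      rw [Finset.sum_congr rfl h1]
      have h2 : (u.reverse ++ [a]).getD u.length false = a := by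
        rw [List.getD_eq_getElem?_getD]
        rw [List.getElem?_append_right (by simp)]
        simp
      rw [h2]
      ring

lemma valF_cons (a : Bool) (u : List Bool) :
    valF (a :: u) = sval u - bv a * F u.length := by
  rw [valF, sval_eq_sum]
  simp only [List.length_cons, Nat.add_sub_cancel, List.reverse_cons]
  have h1 : ∀ i ∈ Finset.range u.length,
      bv ((u.reverse ++ [a]).getD i false) * F (i+1)
        = bv (u.reverse.getD i false) * F (i+1) := by
    intro i hi
    simp only [Finset.mem_range] at hi
    rw [List.getD_append]
    · simpa using hi
  rw [Finset.sum_congr rfl h1]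
  have h2 : (u.reverse ++ [a]).getD u.length false = a := by
    rw [List.getD_eq_getElem?_getD]
    rw [List.getElem?_append_right (by simp)]
    simp
  rw [h2]

lemma sval_nonneg : ∀ u : List Bool, 0 ≤ sval u
  | [] => le_refl 0
  | a :: u => by
      rw [sval]
      have := sval_nonneg u
      have := mul_nonneg (bv_nonneg a) (F_pos (u.length + 1)).le
      omega

lemma sval_le : ∀ u : List Bool, no11 u → sval u ≤ F (u.length + 1) - 1
  | [] => fun _ => by norm_num [sval, F]
  | false :: u => fun h => by
      rw [sval]
      have hu : no11 u := h.tail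
      have := sval_le u hu
      have := F_le_succ (u.length + 1)
      simp only [bv, List.length_cons]
      norm_num
      omega
  | [true] => fun _ => by norm_num [sval, bv, F]
  | true :: true :: u => fun h => by
      exfalso
      have h1 := (List.isChain_cons_cons.mp h).1
      exact h1 ⟨rfl, rfl⟩
  | true :: false :: v => fun h => by
      have hv : no11 v := h.tail.tail
      have := sval_le v hv
      simp only [sval, bv, List.length_cons]
      norm_num
      have e1 : F (v.length + 1 + 1 + 1) = F (v.length + 1 + 1) + F (v.length + 1) := by
        show F (v.length + 1 + 2) = _; rw [F]
      have e2 : F (v.length + 1 + 1) = F (v.length + 1) + F v.length := by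
        show F (v.length + 2) = _; rw [F]
      omega

lemma valF_mem (a : Bool) (u : List Bool) (h : no11 (a :: u)) :
    -F u.length ≤ valF (a :: u) ∧ valF (a :: u) < F (u.length + 1) := by
  rw [valF_cons]
  have h1 := sval_nonneg u
  have h2 := sval_le u h.tail
  have h3 : bv a * F u.length ≤ F u.length := by
    cases a <;> simp [bv, (F_pos u.length).le]
  have h4 := mul_nonneg (bv_nonneg a) (F_pos u.length).le
  constructor <;> omega

lemma valF_notmem (a b c : Bool) (v : List Bool) (h : IsRep (a :: b :: c :: v)) :
    valF (a :: b :: c :: v) < -F v.length ∨ F (v.length + 1) ≤ valF (a :: b :: c :: v) := by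
  obtain ⟨-, hc, h000, h101⟩ := h
  rw [no11] at hc
  replace hc := List.isChain_cons_cons.mp hc
  obtain ⟨hab, hc⟩ := hc
  rw [List.isChain_cons_cons] at hc
  obtain ⟨hbc, hc⟩ := hc
  rw [valF_cons, sval, sval]
  simp only [List.length_cons]
  have h1 := sval_nonneg v
  have h2 := sval_le v hc.tail
  have e1 : F (v.length + 1 + 1) = F (v.length + 1) + F v.length := by
    show F (v.length + 2) = _; rw [F]
  cases a with
  | true =>
      have hb : b = false := by cases b; rfl; exact absurd ⟨rfl, rfl⟩ hab
      have hcc : c = false := by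
        cases c; rfl
        exact absurd ⟨v, by simp [hb]⟩ h101
      subst hb; subst hcc
      left
      simp only [bv_true, bv_false, zero_mul, one_mul]
      omega
  | false =>
      right
      have hbc' : b = true ∨ c = true := by
        by_contra hcon
        push_neg at hcon
        have hb : b = false := by cases b; rfl; exact absurd rfl hcon.1
        have hcc : c = false := by cases c; rfl; exact absurd rfl hcon.2
        exact h000 ⟨v, by simp [hb, hcc]⟩
      have h5 := mul_nonneg (bv_nonneg b) (F_pos (v.length + 1 + 1)).le
      have h6 := mul_nonneg (bv_nonneg c) (F_pos (v.length + 1)).le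
      rcases hbc' with hb | hcc
      · subst hb
        have hcf : c = false := by cases c; rfl; exact absurd ⟨rfl, rfl⟩ hbc
        subst hcf
        simp only [bv_true, bv_false, zero_mul, one_mul]
        have := F_pos v.length
        omega
      · subst hcc
        have hbf : b = false := by cases b; rfl; exact absurd ⟨rfl, rfl⟩ hbc
        subst hbf
        simp only [bv_true, bv_false, zero_mul, one_mul]
        have := F_pos (v.length + 1 + 1)
        omega

lemma sval_rep_false : ∀ n, sval (List.replicate n false) = 0
  | 0 => rfl
  | (n+1) => by rw [List.replicate_succ, sval, sval_rep_false n]; simp [bv]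

lemma flat_tf : ∀ k, ((List.replicate k [true, false]).flatten).length = 2*k ∧
    sval ((List.replicate k [true, false]).flatten) = F (2*k+1) - 1
  | 0 => by norm_num [sval, F]
  | (k+1) => by
      obtain ⟨hl, hs⟩ := flat_tf k
      rw [List.replicate_succ, List.flatten_cons]
      constructor
      · simp [hl]; ring
      · simp only [List.cons_append, List.nil_append]
        show sval (true :: false :: _) = _
        rw [sval, sval, hs]
        simp only [List.length_cons, hl, bv_true, bv_false, zero_mul, one_mul]
        have e1 : F (2*(k+1)+1) = F (2*k+1+1) + F (2*k+1) := by
          rw [show 2*(k+1)+1 = 2*k+1+2 by ring, F]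
        omega

lemma mem_of_len_le (w : List Bool) (h : IsRep w) (k : ℕ) (hl : w.length ≤ 2*k+1) :
    valF w ∈ Ik k := by
  cases w with
  | nil => exact absurd h.1 (by norm_num)
  | cons a u =>
      obtain ⟨h1, h2⟩ := valF_mem a u h.2.1
      have m1 := F_mono (show u.length ≤ 2*k by simpa using hl)
      have m2 := F_mono (show u.length + 1 ≤ 2*k+1 by simp at hl; omega)
      exact ⟨by omega, by omega⟩

lemma len_le_of_mem (w : List Bool) (h : IsRep w) (k : ℕ) (hm : valF w ∈ Ik k) :
    w.length ≤ 2*k+1 := by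
  by_contra hlen
  push_neg at hlen
  obtain ⟨hm1, hm2⟩ := hm
  match w, h, hlen with
  | [], h, hlen => simp at hlen
  | [a], h, hlen => simp at hlen
  | [a, b], h, hlen => exact absurd h.1 (by norm_num)
  | (a :: b :: c :: v), h, hlen =>
      have hodd : Odd (v.length + 3) := by simpa using h.1
      rw [Nat.odd_iff] at hodd
      have hlen' : 2*k + 1 < v.length + 3 := by simp at hlen; omega
      have hvk : 2*k ≤ v.length := by omega
      have m1 := F_mono hvk
      have m2 := F_mono (show 2*k+1 ≤ v.length + 1 by omega)
      rcases valF_notmem a b c v h with hlt | hge <;> omega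

/-- `I_k` is the set of integers whose canonical representation has length at
most `2k+1`; the minimal value `−F_{2k}` is attained by the word `1(00)^k` and
the maximal value `F_{2k+1} − 1` by the word `0(10)^k`. -/
theorem Ik_eq_short_reps (repF : ℤ → List Bool)
    (hrep : ∀ n : ℤ, IsRep (repF n) ∧ valF (repF n) = n) (k : ℕ) :
    Ik k = {n : ℤ | (repF n).length ≤ 2*k+1}
      ∧ valF (true :: List.replicate (2*k) false) = -F (2*k)
      ∧ valF (false :: (List.replicate k [true, false]).flatten) = F (2*k+1) - 1 := by

  refine ⟨?_, ?_, ?_⟩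
  · ext n
    obtain ⟨hr, hv⟩ := hrep n
    constructor
    · intro hn
      exact len_le_of_mem _ hr k (by rw [hv]; exact hn)
    · intro hn
      have := mem_of_len_le _ hr k hn
      rwa [hv] at this
  · rw [valF_cons, sval_rep_false, bv_true, List.length_replicate]
    ring
  · rw [valF_cons, (flat_tf k).2, bv_false]
    ring
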